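/- For every θ ∈ [0, π/2], with τ₀ = cos(θ/2)e₀ + sin(θ/2)e₁, τ₁ = sin(θ/2)e₀ + cos(θ/2)e₁, Σ'₁ = (1/√2)(e₀ ⊗ τ₀ + e₁ ⊗ τ₁), Σ'₂ = (1/√2)(e₀ ⊗ τ₁ + e₁ ⊗ τ₀), and κ' = (1/2)|Σ'₁⟩⟨Σ'₁| + (1/2)|Σ'₂⟩⟨Σ'₂|, the determinant of the partial transpose of κ' over the second subsystem vanishes: det(κ'^{T₂}) = 0. -/
import Mathlib


open Matrix Kronecker Polynomial ComplexOrder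

noncomputable section

/-- Partial trace over the first subsystem of a two-qubit (4×4) matrix. -/
def ptr1 (M : Matrix (Fin 2 × Fin 2) (Fin 2 × Fin 2) ℂ) : Matrix (Fin 2) (Fin 2) ℂ :=
  Matrix.of fun j l => ∑ i, M (i, j) (i, l)

/-- Partial trace over the second subsystem of a two-qubit (4×4) matrix. -/
def ptr2 (M : Matrix (Fin 2 × Fin 2) (Fin 2 × Fin 2) ℂ) : Matrix (Fin 2) (Fin 2) ℂ :=
  Matrix.of fun i k => ∑ j, M (i, j) (k, j)

/-- Rank-one projection |v⟩⟨v| of a qubit vector. -/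
def proj2 (v : Fin 2 → ℂ) : Matrix (Fin 2) (Fin 2) ℂ :=
  Matrix.of fun i j => v i * star (v j)

/-- Rank-one projection |v⟩⟨v| of a two-qubit vector. -/
def proj4 (v : Fin 2 × Fin 2 → ℂ) : Matrix (Fin 2 × Fin 2) (Fin 2 × Fin 2) ℂ :=
  Matrix.of fun p q => v p * star (v q)

/-- Kronecker (tensor) product of two qubit vectors. -/
def tens (a b : Fin 2 → ℂ) : Fin 2 × Fin 2 → ℂ := fun p => a p.1 * b p.2

/-- Unit (normalized) vector. -/
def UnitVec {α : Type*} [Fintype α] (v : α → ℂ) : Prop := ∑ i, v i * star (v i) = 1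

/-- Hermitian inner product of two-qubit vectors. -/
def inner4 (v w : Fin 2 × Fin 2 → ℂ) : ℂ := ∑ p, star (v p) * w p

/-- A 2×2 density matrix: positive semidefinite with unit trace. -/
def IsDensity2 (A : Matrix (Fin 2) (Fin 2) ℂ) : Prop := A.PosSemidef ∧ A.trace = 1

/-- Separability of a two-qubit density matrix: a finite convex combination of
Kronecker products of 2×2 density matrices. -/
def Separable4 (ρ : Matrix (Fin 2 × Fin 2) (Fin 2 × Fin 2) ℂ) : Prop :=
  ∃ (n : ℕ) (w : Fin n → ℝ) (A B : Fin n → Matrix (Fin 2) (Fin 2) ℂ),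
    (∀ i, 0 ≤ w i) ∧ (∑ i, w i = 1) ∧
    (∀ i, IsDensity2 (A i)) ∧ (∀ i, IsDensity2 (B i)) ∧
    ρ = ∑ i, (w i : ℂ) • (A i ⊗ₖ B i)

/-- Standard basis vector e₀ of ℂ². -/
def e₀ : Fin 2 → ℂ := ![1, 0]

/-- Standard basis vector e₁ of ℂ². -/
def e₁ : Fin 2 → ℂ := ![0, 1]

/-- τ₀-type vector: cos(t/2)e₀ + sin(t/2)e₁. -/
def tau0 (t : ℝ) : Fin 2 → ℂ := ![(Real.cos (t/2) : ℂ), (Real.sin (t/2) : ℂ)]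

/-- τ₁-type vector: sin(t/2)e₀ + cos(t/2)e₁. -/
def tau1 (t : ℝ) : Fin 2 → ℂ := ![(Real.sin (t/2) : ℂ), (Real.cos (t/2) : ℂ)]

/-- Σ'₁ = (1/√2)(e₀ ⊗ τ₀ + e₁ ⊗ τ₁). -/
def sig1' (t : ℝ) : Fin 2 × Fin 2 → ℂ :=
  fun q => ((Real.sqrt 2)⁻¹ : ℂ) * (tens e₀ (tau0 t) q + tens e₁ (tau1 t) q)

/-- Σ'₂ = (1/√2)(e₀ ⊗ τ₁ + e₁ ⊗ τ₀). -/
def sig2' (t : ℝ) : Fin 2 × Fin 2 → ℂ :=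
  fun q => ((Real.sqrt 2)⁻¹ : ℂ) * (tens e₀ (tau1 t) q + tens e₁ (tau0 t) q)

/-- The common reduced state: diagonal entries 1/2, off-diagonal entries (sin θ)/2. -/
def redMat (t : ℝ) : Matrix (Fin 2) (Fin 2) ℂ :=
  !![(1/2 : ℂ), ((Real.sin t / 2 : ℝ) : ℂ); ((Real.sin t / 2 : ℝ) : ℂ), (1/2 : ℂ)]

/-- κ'(p) = p|Σ'₁⟩⟨Σ'₁| + (1−p)|Σ'₂⟩⟨Σ'₂|. -/
def kappa' (t p : ℝ) : Matrix (Fin 2 × Fin 2) (Fin 2 × Fin 2) ℂ :=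
  (p : ℂ) • proj4 (sig1' t) + (1 - (p : ℂ)) • proj4 (sig2' t)

/-- Partial transpose over the second subsystem: (M^{T₂})_{(i,j),(k,l)} = M_{(i,l),(k,j)}. -/
def ptransp2 (M : Matrix (Fin 2 × Fin 2) (Fin 2 × Fin 2) ℂ) :
    Matrix (Fin 2 × Fin 2) (Fin 2 × Fin 2) ℂ :=
  Matrix.of fun q r => M (q.1, r.2) (r.1, q.2)

/-- the determinant of the partial transpose (over the second subsystem)
of the equal masked mixture κ'(1/2) vanishes for every θ ∈ [0, π/2]. -/
theorem det_partial_transpose_of_equal_mixture_vanishes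
    (θ : ℝ) (hθ : θ ∈ Set.Icc (0 : ℝ) (Real.pi / 2)) :
    (ptransp2 (kappa' θ (1/2))).det = 0 := by
  apply Matrix.det_zero_of_row_eq (i := ((0 : Fin 2), (1 : Fin 2)))
    (j := ((1 : Fin 2), (0 : Fin 2)))
  · decide
  · funext q
    obtain ⟨a, b⟩ := q
    fin_cases a <;> fin_cases b <;>
      · show (kappa' θ (1/2)) _ _ = (kappa' θ (1/2)) _ _
        simp only [kappa', proj4, sig1', sig2', tens, e₀, e₁, tau0, tau1,
          Matrix.of_apply, Matrix.add_apply, Matrix.smul_apply, smul_eq_mul,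
          Matrix.cons_val_zero, Matrix.cons_val_one, Matrix.head_cons,
          star_mul', map_add, star_add, Complex.star_def, _root_.map_mul, _root_.map_one,
          map_zero, Complex.conj_ofReal, map_inv₀, Complex.conj_ofNat,
          Fin.mk_zero, Fin.mk_one]
        push_cast
        ring

end
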